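/- Let (α,β) be a point of the topological interior of △ whose triangle sequence is finite and equal to [α₀,…,α_k], i.e. T^j(α,β) ∈ △_{α_j} for j = 0,…,k and T^{k+1}(α,β) ∈ Λ. Then there exists a unique ξ ∈ (0,1) such that (α,β) = φ₁^{α₀}φ₀ ⋯ φ₁^{α_k}φ₀ φ₂(ξ,ξ). -/

import Mathlib

noncomputable def phi0 (p : ℝ × ℝ) : ℝ × ℝ := (1 / (1 + p.2), p.1 / (1 + p.2))
noncomputable def phi1 (p : ℝ × ℝ) : ℝ × ℝ := (p.1 / (1 + p.2), p.2 / (1 + p.2))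
def phi2 (p : ℝ × ℝ) : ℝ × ℝ := (p.1, 0)

/-- The open triangle △ = {(x,y) : 1 ≥ x ≥ y > 0}. -/
def tri : Set (ℝ × ℝ) := {p | 1 ≥ p.1 ∧ p.1 ≥ p.2 ∧ p.2 > 0}

/-- The subtriangle △_k. -/
def triK (k : ℕ) : Set (ℝ × ℝ) :=
  {p | p ∈ tri ∧ 1 - p.1 - (k : ℝ) * p.2 ≥ 0 ∧ 1 - p.1 - ((k : ℝ) + 1) * p.2 < 0}

/-- Λ = {(x,0) : 0 ≤ x ≤ 1}. -/
def LambdaSet : Set (ℝ × ℝ) := {p | 0 ≤ p.1 ∧ p.1 ≤ 1 ∧ p.2 = 0}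

/-- The Triangle map `T(x,y) = (y/x, (1-x-ky)/x)` for `(x,y) ∈ △_k`; the index `k`
is recovered as `⌊(1-x)/y⌋`. -/
noncomputable def Tmap (p : ℝ × ℝ) : ℝ × ℝ :=
  (p.2 / p.1, (1 - p.1 - (⌊(1 - p.1) / p.2⌋ : ℝ) * p.2) / p.1)

/-- The composition φ₁^{α₀} φ₀ ⋯ φ₁^{α_k} φ₀. -/
noncomputable def compPhi (a : ℕ → ℕ) : ℕ → (ℝ × ℝ → ℝ × ℝ)
  | 0 => phi1^[a 0] ∘ phi0
  | k + 1 => compPhi a k ∘ (phi1^[a (k + 1)] ∘ phi0)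

/- ---------- auxiliary lemmas ---------- -/

lemma phi0_quad {p : ℝ × ℝ} (h1 : 0 ≤ p.1) (h2 : 0 ≤ p.2) :
    0 ≤ (phi0 p).1 ∧ 0 ≤ (phi0 p).2 := by
  have : (0:ℝ) < 1 + p.2 := by linarith
  constructor <;> simp only [phi0] <;> positivity

lemma phi1_quad {p : ℝ × ℝ} (h1 : 0 ≤ p.1) (h2 : 0 ≤ p.2) :
    0 ≤ (phi1 p).1 ∧ 0 ≤ (phi1 p).2 := by
  have : (0:ℝ) < 1 + p.2 := by linarith
  constructor <;> simp only [phi1] <;> positivity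

lemma phi1_iter_quad (m : ℕ) {p : ℝ × ℝ} (h1 : 0 ≤ p.1) (h2 : 0 ≤ p.2) :
    0 ≤ (phi1^[m] p).1 ∧ 0 ≤ (phi1^[m] p).2 := by
  induction m generalizing p with
  | zero => exact ⟨h1, h2⟩
  | succ m ih =>
    rw [Function.iterate_succ_apply]
    obtain ⟨q1, q2⟩ := phi1_quad h1 h2
    exact ih q1 q2

lemma phi0_inj {p q : ℝ × ℝ} (hp : 0 ≤ p.2) (hq : 0 ≤ q.2) (h : phi0 p = phi0 q) : p = q := by
  have hp1 : (0:ℝ) < 1 + p.2 := by linarith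
  have hq1 : (0:ℝ) < 1 + q.2 := by linarith
  have h1 : 1 / (1 + p.2) = 1 / (1 + q.2) := congrArg Prod.fst h
  have h2 : p.1 / (1 + p.2) = q.1 / (1 + q.2) := congrArg Prod.snd h
  have e2 : p.2 = q.2 := by
    field_simp at h1; linarith
  rw [e2] at h2
  have e1 : p.1 = q.1 := by
    field_simp at h2; exact h2
  exact Prod.ext e1 e2

lemma phi1_inj {p q : ℝ × ℝ} (hp : 0 ≤ p.2) (hq : 0 ≤ q.2) (h : phi1 p = phi1 q) : p = q := by
  have hp1 : (0:ℝ) < 1 + p.2 := by linarith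
  have hq1 : (0:ℝ) < 1 + q.2 := by linarith
  have h1 : p.1 / (1 + p.2) = q.1 / (1 + q.2) := congrArg Prod.fst h
  have h2 : p.2 / (1 + p.2) = q.2 / (1 + q.2) := congrArg Prod.snd h
  have e2 : p.2 = q.2 := by
    field_simp at h2; nlinarith
  rw [e2] at h1
  have e1 : p.1 = q.1 := by
    field_simp at h1; exact h1
  exact Prod.ext e1 e2

lemma phi1_iter_inj (m : ℕ) {p q : ℝ × ℝ} (hp1 : 0 ≤ p.1) (hp2 : 0 ≤ p.2)
    (hq1 : 0 ≤ q.1) (hq2 : 0 ≤ q.2) (h : phi1^[m] p = phi1^[m] q) : p = q := by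
  induction m generalizing p q with
  | zero => exact h
  | succ m ih =>
    rw [Function.iterate_succ_apply, Function.iterate_succ_apply] at h
    obtain ⟨a1, a2⟩ := phi1_quad hp1 hp2
    obtain ⟨b1, b2⟩ := phi1_quad hq1 hq2
    exact phi1_inj hp2 hq2 (ih a1 a2 b1 b2 h)

lemma compPhi_inj (a : ℕ → ℕ) (k : ℕ) {p q : ℝ × ℝ} (hp1 : 0 ≤ p.1) (hp2 : 0 ≤ p.2)
    (hq1 : 0 ≤ q.1) (hq2 : 0 ≤ q.2) (h : compPhi a k p = compPhi a k q) : p = q := by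
  induction k generalizing p q with
  | zero =>
    simp only [compPhi, Function.comp_apply] at h
    obtain ⟨a1, a2⟩ := phi0_quad hp1 hp2
    obtain ⟨b1, b2⟩ := phi0_quad hq1 hq2
    exact phi0_inj hp2 hq2 (phi1_iter_inj (a 0) a1 a2 b1 b2 h)
  | succ k ih =>
    simp only [compPhi, Function.comp_apply] at h
    obtain ⟨a1, a2⟩ := phi0_quad hp1 hp2
    obtain ⟨b1, b2⟩ := phi0_quad hq1 hq2
    obtain ⟨a1', a2'⟩ := phi1_iter_quad (a (k+1)) a1 a2
    obtain ⟨b1', b2'⟩ := phi1_iter_quad (a (k+1)) b1 b2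
    exact phi0_inj hp2 hq2 (phi1_iter_inj (a (k+1)) a1 a2 b1 b2 (ih a1' a2' b1' b2' h))

lemma phi1_scale : ∀ (m : ℕ) (x y : ℝ), 0 ≤ y → 0 < 1 - (m:ℝ) * y →
    phi1^[m] (x / (1 - (m:ℝ)*y), y / (1 - (m:ℝ)*y)) = (x, y)
  | 0, x, y, _, _ => by norm_num
  | (m+1), x, y, hy, h => by
    have h' : (0:ℝ) < 1 - (m:ℝ) * y := by push_cast at h ⊢; linarith
    rw [Function.iterate_succ_apply]
    have hc : (1:ℝ) - ((m:ℕ)+1:ℝ) * y ≠ 0 := by push_cast at h ⊢; linarith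
    have step : phi1 (x / (1 - ((m:ℝ)+1)*y), y / (1 - ((m:ℝ)+1)*y))
        = (x / (1 - (m:ℝ)*y), y / (1 - (m:ℝ)*y)) := by
      have hd : (1:ℝ) + y / (1 - ((m:ℝ)+1)*y) = (1 - (m:ℝ)*y) / (1 - ((m:ℝ)+1)*y) := by
        rw [eq_div_iff hc, add_mul, div_mul_cancel₀ _ hc]; ring
      simp only [phi1, hd]
      have h1 : (1:ℝ) - ((m:ℝ)+1)*y ≠ 0 := by push_cast at h; linarith
      rw [Prod.mk.injEq]
      constructor <;> rw [div_div_div_cancel_right₀ h1]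
    push_cast
    rw [step, phi1_scale m x y hy h']

lemma floor_index {m : ℕ} {w : ℝ × ℝ} (hw : w ∈ triK m) :
    ⌊(1 - w.1) / w.2⌋ = (m : ℤ) := by
  obtain ⟨⟨h1, h2, h3⟩, h4, h5⟩ := hw
  rw [Int.floor_eq_iff]
  constructor
  · rw [le_div_iff₀ h3]; push_cast; linarith
  · rw [div_lt_iff₀ h3]; push_cast; linarith

lemma inv_step {m : ℕ} {w : ℝ × ℝ} (hw : w ∈ triK m) :
    phi1^[m] (phi0 (Tmap w)) = w := by
  have hfl := floor_index hw
  obtain ⟨⟨h1, h2, h3⟩, h4, h5⟩ := hw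
  have hx : 0 < w.1 := lt_of_lt_of_le h3 h2
  have hmy : (0:ℝ) < 1 - (m:ℝ) * w.2 := by linarith
  have hT : Tmap w = (w.2 / w.1, (1 - w.1 - (m:ℝ) * w.2) / w.1) := by
    simp only [Tmap, hfl]
    norm_num
  have hden : (1:ℝ) + (1 - w.1 - (m:ℝ) * w.2) / w.1 = (1 - (m:ℝ)*w.2) / w.1 := by
    field_simp
    ring
  have hphi : phi0 (Tmap w) = (w.1 / (1 - (m:ℝ)*w.2), w.2 / (1 - (m:ℝ)*w.2)) := by
    rw [hT]
    simp only [phi0, hden]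
    have hx' : w.1 ≠ 0 := ne_of_gt hx
    have hmy' : (1:ℝ) - (m:ℝ) * w.2 ≠ 0 := ne_of_gt hmy
    rw [Prod.mk.injEq]
    constructor <;> (field_simp; try ring)
  rw [hphi, phi1_scale m w.1 w.2 (le_of_lt h3) hmy]

lemma comp_inv (a : ℕ → ℕ) : ∀ (k : ℕ) (z : ℝ × ℝ),
    (∀ j ≤ k, Tmap^[j] z ∈ triK (a j)) → compPhi a k (Tmap^[k+1] z) = z := by
  intro k
  induction k with
  | zero =>
    intro z hts
    have h0 := hts 0 le_rfl
    simp only [compPhi, Function.comp_apply, Function.iterate_one]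
    exact inv_step h0
  | succ k ih =>
    intro z hts
    have hk1 := hts (k+1) le_rfl
    simp only [compPhi, Function.comp_apply]
    rw [Function.iterate_succ_apply' Tmap (k+1) z]
    rw [inv_step hk1]
    exact ih z (fun j hj => hts j (le_trans hj (Nat.le_succ k)))

theorem exists_unique_xi (a : ℕ → ℕ) (k : ℕ) (z : ℝ × ℝ)
    (hint : z ∈ interior tri)
    (hts : ∀ j ≤ k, Tmap^[j] z ∈ triK (a j))
    (hlast : Tmap^[k + 1] z ∈ LambdaSet) :
    ∃! ξ : ℝ, ξ ∈ Set.Ioo (0 : ℝ) 1 ∧ z = compPhi a k (phi2 (ξ, ξ)) := by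
  -- strict inequalities at z
  have hz : z.2 < z.1 := by
    rw [mem_interior_iff_mem_nhds, Metric.mem_nhds_iff] at hint
    obtain ⟨ε, hε, hball⟩ := hint
    by_contra hcon
    push_neg at hcon
    have hz0 : z ∈ tri := hball (Metric.mem_ball_self hε)
    obtain ⟨t1, t2, t3⟩ := hz0
    have heq : z.1 = z.2 := le_antisymm hcon t2
    have hmem : ((z.1, z.2 + ε/2) : ℝ × ℝ) ∈ Metric.ball z ε := by
      rw [Metric.mem_ball, Prod.dist_eq]
      have d1 : dist ((z.1, z.2 + ε/2) : ℝ × ℝ).1 z.1 = 0 := by simp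
      have d2 : dist ((z.1, z.2 + ε/2) : ℝ × ℝ).2 z.2 = ε/2 := by
        show dist (z.2 + ε/2) z.2 = ε/2
        rw [Real.dist_eq, show z.2 + ε/2 - z.2 = ε/2 by ring, abs_of_nonneg (by linarith)]
      rw [d1, d2, max_eq_right (by linarith)]
      linarith
    have h6 : z.1 ≥ z.2 + ε/2 := (hball hmem).2.1
    linarith
  -- the strict inequality propagates along the orbit
  have hstrict : ∀ j ≤ k, (Tmap^[j] z).2 < (Tmap^[j] z).1 := by
    intro j hj
    induction j with
    | zero => exact hz
    | succ j ih =>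
      have hj' : j ≤ k := le_trans (Nat.le_succ j) hj
      have hw := hts j hj'
      have hfl := floor_index hw
      obtain ⟨⟨h1, h2, h3⟩, h4, h5⟩ := hw
      have hx : 0 < (Tmap^[j] z).1 := lt_of_lt_of_le h3 h2
      rw [Function.iterate_succ_apply']
      show (Tmap (Tmap^[j] z)).2 < (Tmap (Tmap^[j] z)).1
      simp only [Tmap, hfl]
      push_cast
      rw [div_lt_div_iff₀ hx hx]
      nlinarith
  -- facts about w := Tmap^[k] z
  have hw := hts k le_rfl
  have hwlt := hstrict k le_rfl
  obtain ⟨⟨h1, h2, h3⟩, h4, h5⟩ := hw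
  have hx : 0 < (Tmap^[k] z).1 := lt_of_lt_of_le h3 h2
  set ξ := (Tmap^[k+1] z).1 with hξdef
  have hfirst : (Tmap^[k+1] z).1 = (Tmap^[k] z).2 / (Tmap^[k] z).1 := by
    rw [Function.iterate_succ_apply']
    rfl
  have hξ0 : 0 < ξ := by rw [hξdef, hfirst]; positivity
  have hξ1 : ξ < 1 := by
    rw [hξdef, hfirst]
    rw [div_lt_one hx]
    exact hwlt
  have hsnd : (Tmap^[k+1] z).2 = 0 := hlast.2.2
  have hpt : Tmap^[k+1] z = (ξ, 0) := by
    rw [hξdef]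
    exact Prod.ext rfl hsnd
  have hex : z = compPhi a k (phi2 (ξ, ξ)) := by
    have : phi2 (ξ, ξ) = (ξ, (0:ℝ)) := rfl
    rw [this, ← hpt, comp_inv a k z hts]
  refine ⟨ξ, ⟨⟨hξ0, hξ1⟩, hex⟩, ?_⟩
  rintro ξ' ⟨⟨hξ'0, hξ'1⟩, hex'⟩
  have hpq : compPhi a k ((ξ', (0:ℝ))) = compPhi a k ((ξ, (0:ℝ))) := by
    have e1 : phi2 (ξ', ξ') = ((ξ', (0:ℝ))) := rfl
    have e2 : phi2 (ξ, ξ) = ((ξ, (0:ℝ))) := rfl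
    rw [← e1, ← e2, ← hex', ← hex]
  have hkey : ((ξ', (0:ℝ)) : ℝ × ℝ) = ((ξ, (0:ℝ)) : ℝ × ℝ) :=
    compPhi_inj a k (le_of_lt hξ'0) le_rfl (le_of_lt hξ0) le_rfl hpq
  exact congrArg Prod.fst hkey
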